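/- arXiv:2101.03859 — 2 statements merged into one kernel-verified Lean document; each statement's English description precedes it below -/
import Mathlib

section
/- Exact Dirichlet energy of the bubble on a disc: for every λ > 0 and δ > 0, ∫_{{x ∈ ℝ² : ‖x‖ < δ}} (4λ²‖x‖/(1 + λ²‖x‖²))² dx = 16π·( ln(1 + λ²δ²) + 1/(1 + λ²δ²) − 1 ), where dx is Lebesgue measure on ℝ². -/
open Real MeasureTheory

theorem stmt3 (lam δ : ℝ) (hlam : 0 < lam) (hδ : 0 < δ) :
    ∫ x in Metric.ball (0 : EuclideanSpace ℝ (Fin 2)) δ,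
        (4 * lam ^ 2 * ‖x‖ / (1 + lam ^ 2 * ‖x‖ ^ 2)) ^ 2
      = 16 * π * (Real.log (1 + lam ^ 2 * δ ^ 2) + 1 / (1 + lam ^ 2 * δ ^ 2) - 1) := by
  set g : ℝ → ℝ := fun r => if r < δ then (4 * lam ^ 2 * r / (1 + lam ^ 2 * r ^ 2)) ^ 2 else 0
    with hg
  have h1 : ∫ x in Metric.ball (0 : EuclideanSpace ℝ (Fin 2)) δ,
      (4 * lam ^ 2 * ‖x‖ / (1 + lam ^ 2 * ‖x‖ ^ 2)) ^ 2 = ∫ x : EuclideanSpace ℝ (Fin 2), g ‖x‖ := by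
    rw [← integral_indicator measurableSet_ball]
    congr 1
    ext x
    simp only [Set.indicator, Metric.mem_ball, dist_zero_right, hg]
  rw [h1, integral_fun_norm_addHaar volume g]
  have hdim : Module.finrank ℝ (EuclideanSpace ℝ (Fin 2)) = 2 := by
    simp [finrank_euclideanSpace]
  rw [hdim]
  have hvol : (volume (Metric.ball (0 : EuclideanSpace ℝ (Fin 2)) 1)).toReal = π := by
    rw [EuclideanSpace.volume_ball]
    have h2 : Real.Gamma ((Fintype.card (Fin 2) : ℝ) / 2 + 1) = 1 := by
      norm_num [Real.Gamma_two]
    rw [h2]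
    simp [Real.sq_sqrt Real.pi_pos.le, ENNReal.toReal_ofReal Real.pi_pos.le]
  rw [measureReal_def, hvol]
  -- compute the radial integral
  have hI : ∫ y in Set.Ioi (0 : ℝ), y ^ (2 - 1) • g y
      = 8 * (Real.log (1 + lam ^ 2 * δ ^ 2) + 1 / (1 + lam ^ 2 * δ ^ 2)) - 8 := by
    have hind : ∀ y : ℝ, y ^ (2 - 1) • g y
        = Set.indicator (Set.Iio δ) (fun y => y * (4 * lam ^ 2 * y / (1 + lam ^ 2 * y ^ 2)) ^ 2) y := by
      intro y
      simp only [hg, Set.indicator, Set.mem_Iio, pow_one, smul_eq_mul]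
      split <;> simp
    simp_rw [hind]
    rw [integral_indicator measurableSet_Iio, Measure.restrict_restrict measurableSet_Iio,
      Set.Iio_inter_Ioi, ← integral_Ioc_eq_integral_Ioo,
      ← intervalIntegral.integral_of_le hδ.le]
    have hF : ∀ y : ℝ, HasDerivAt
        (fun y : ℝ => 8 * (Real.log (1 + lam ^ 2 * y ^ 2) + (1 + lam ^ 2 * y ^ 2)⁻¹))
        (y * (4 * lam ^ 2 * y / (1 + lam ^ 2 * y ^ 2)) ^ 2) y := by
      intro y
      have h0 : (0 : ℝ) < 1 + lam ^ 2 * y ^ 2 := by positivity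
      have hq : HasDerivAt (fun y : ℝ => 1 + lam ^ 2 * y ^ 2) (lam ^ 2 * (2 * y)) y := by
        have := ((hasDerivAt_pow 2 y).const_mul (lam ^ 2)).const_add 1
        simpa [mul_comm] using this
      have hlog := hq.log h0.ne'
      have hinv := hq.inv h0.ne'
      have := (hlog.add hinv).const_mul 8
      refine this.congr_deriv ?_
      field_simp
      ring
    have hcont : Continuous fun y : ℝ => y * (4 * lam ^ 2 * y / (1 + lam ^ 2 * y ^ 2)) ^ 2 := by
      have hne : ∀ y : ℝ, (1 + lam ^ 2 * y ^ 2) ≠ 0 := fun y => by positivity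
      exact continuous_id.mul (((continuous_const.mul continuous_id).div
        (by continuity) fun y => hne y).pow 2)
    rw [intervalIntegral.integral_eq_sub_of_hasDerivAt (fun y _ => hF y)
      (hcont.intervalIntegrable 0 δ)]
    norm_num
  rw [hI]
  simp only [smul_eq_mul, nsmul_eq_mul, Nat.cast_ofNat]
  ring
end

section
/- Logarithmic growth of the bubble energy: for every δ > 0 and every λ ≥ 1, ∫_{{x ∈ ℝ² : ‖x‖ < δ}} (4λ²‖x‖/(1 + λ²‖x‖²))² dx ≤ 32π·ln λ + 16π·ln(1 + δ²). -/
open Real MeasureTheory Set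

-- 1D FTC piece
lemma deriv_aux (lam : ℝ) (hlam : 0 < lam) (y : ℝ) :
    HasDerivAt (fun r : ℝ => 8 * (Real.log (1 + lam ^ 2 * r ^ 2) + (1 + lam ^ 2 * r ^ 2)⁻¹))
      (y * (4 * lam ^ 2 * y / (1 + lam ^ 2 * y ^ 2)) ^ 2) y := by
  have hpos : 0 < 1 + lam ^ 2 * y ^ 2 := by positivity
  have hu : HasDerivAt (fun r : ℝ => 1 + lam ^ 2 * r ^ 2) (2 * lam ^ 2 * y) y := by
    simpa [mul_comm, mul_assoc, mul_left_comm] using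
      (((hasDerivAt_pow 2 y).const_mul (lam ^ 2)).const_add 1)
  have hlog := (Real.hasDerivAt_log hpos.ne').comp y hu
  have hinv := hu.inv hpos.ne'
  have := ((hlog.add hinv).const_mul (8 : ℝ))
  refine this.congr_deriv ?_
  field_simp
  ring

lemma oneD (δ lam : ℝ) (hδ : 0 < δ) (hlam : 0 < lam) :
    ∫ y in Ioo (0:ℝ) δ, y * (4 * lam ^ 2 * y / (1 + lam ^ 2 * y ^ 2)) ^ 2
      = 8 * Real.log (1 + lam ^ 2 * δ ^ 2) + 8 * (1 + lam ^ 2 * δ ^ 2)⁻¹ - 8 := by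
  have hcont : Continuous (fun y : ℝ => y * (4 * lam ^ 2 * y / (1 + lam ^ 2 * y ^ 2)) ^ 2) := by
    apply Continuous.mul continuous_id
    apply Continuous.pow
    apply Continuous.div (by continuity) (by continuity)
    intro y; positivity
  have h := intervalIntegral.integral_eq_sub_of_hasDerivAt
    (f := fun r : ℝ => 8 * (Real.log (1 + lam ^ 2 * r ^ 2) + (1 + lam ^ 2 * r ^ 2)⁻¹))
    (fun y _ => deriv_aux lam hlam y) (hcont.intervalIntegrable 0 δ)
  rw [intervalIntegral.integral_of_le hδ.le, MeasureTheory.integral_Ioc_eq_integral_Ioo] at h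
  rw [h]
  simp
  ring

theorem stmt4 (δ lam : ℝ) (hδ : 0 < δ) (hlam : 1 ≤ lam) :
    ∫ x in Metric.ball (0 : EuclideanSpace ℝ (Fin 2)) δ,
        (4 * lam ^ 2 * ‖x‖ / (1 + lam ^ 2 * ‖x‖ ^ 2)) ^ 2
      ≤ 32 * π * Real.log lam + 16 * π * Real.log (1 + δ ^ 2) := by
  have hlam0 : (0:ℝ) < lam := lt_of_lt_of_le one_pos hlam
  set f : ℝ → ℝ := fun r => (4 * lam ^ 2 * r / (1 + lam ^ 2 * r ^ 2)) ^ 2 with hf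
  set g : ℝ → ℝ := Set.indicator (Set.Iio δ) f with hg
  have h1 : (∫ x in Metric.ball (0 : EuclideanSpace ℝ (Fin 2)) δ,
      (4 * lam ^ 2 * ‖x‖ / (1 + lam ^ 2 * ‖x‖ ^ 2)) ^ 2)
      = ∫ x : EuclideanSpace ℝ (Fin 2), g ‖x‖ := by
    rw [← MeasureTheory.integral_indicator measurableSet_ball]
    congr 1; ext x
    by_cases hx : ‖x‖ < δ
    · rw [Set.indicator_of_mem (mem_ball_zero_iff.mpr hx),
        hg]
      exact (Set.indicator_of_mem (Set.mem_Iio.mpr hx) f).symm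
    · rw [Set.indicator_of_notMem (fun h => hx (mem_ball_zero_iff.mp h)),
        hg]
      exact (Set.indicator_of_notMem (fun h => hx (Set.mem_Iio.mp h)) f).symm
  have h2 := integral_fun_norm_addHaar (volume : Measure (EuclideanSpace ℝ (Fin 2))) g
  rw [finrank_euclideanSpace_fin] at h2
  have hb : ((volume : Measure (EuclideanSpace ℝ (Fin 2))) (Metric.ball 0 1)).toReal = π := by
    rw [EuclideanSpace.volume_ball]
    have : Real.Gamma ((Fintype.card (Fin 2) : ℝ) / 2 + 1) = 1 := by
      norm_num [Real.Gamma_two]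
    rw [this]
    norm_num [Real.sq_sqrt Real.pi_pos.le, ENNReal.toReal_ofReal Real.pi_pos.le]
  have h3 : (∫ y in Set.Ioi (0:ℝ), y ^ (2-1) • g y)
      = ∫ y in Set.Ioo (0:ℝ) δ, y * f y := by
    have : ∀ y : ℝ, y ^ (2-1) • g y = Set.indicator (Set.Iio δ) (fun y => y * f y) y := by
      intro y
      by_cases h : y ∈ Set.Iio δ <;>
        simp [hg, Set.indicator_of_mem, Set.indicator_of_notMem, h, smul_eq_mul]
    simp only [this]
    rw [MeasureTheory.integral_indicator measurableSet_Iio,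
      MeasureTheory.Measure.restrict_restrict measurableSet_Iio, Set.Iio_inter_Ioi]
  rw [h1, h2, measureReal_def, hb, h3, oneD δ lam hδ hlam0]
  have hd2 : (0:ℝ) < 1 + lam ^ 2 * δ ^ 2 := by positivity
  have hlog : Real.log (1 + lam ^ 2 * δ ^ 2) ≤ 2 * Real.log lam + Real.log (1 + δ ^ 2) := by
    have h1 : 1 + lam ^ 2 * δ ^ 2 ≤ lam ^ 2 * (1 + δ ^ 2) := by nlinarith
    calc Real.log (1 + lam ^ 2 * δ ^ 2) ≤ Real.log (lam ^ 2 * (1 + δ ^ 2)) :=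
          Real.log_le_log hd2 h1
      _ = 2 * Real.log lam + Real.log (1 + δ ^ 2) := by
          rw [Real.log_mul (by positivity) (by positivity), Real.log_pow]
          push_cast; ring
  have hinv : (1 + lam ^ 2 * δ ^ 2)⁻¹ ≤ 1 := by
    rw [inv_le_one_iff₀]; right; nlinarith
  have hpi := Real.pi_pos
  have key : (8 * Real.log (1 + lam ^ 2 * δ ^ 2) + 8 * (1 + lam ^ 2 * δ ^ 2)⁻¹ - 8)
      ≤ 16 * Real.log lam + 8 * Real.log (1 + δ ^ 2) := by linarith
  have := mul_le_mul_of_nonneg_left key hpi.le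
  simp only [nsmul_eq_mul, smul_eq_mul, Nat.cast_ofNat]
  nlinarith [this]
end
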